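/- arXiv:0810.4068 — 7 statements merged into one kernel-verified Lean document; each statement's English description precedes it below -/
import Mathlib

section
/- Let P be a partially ordered set and let F : P → ℝ satisfy 0 ≤ F(p) ≤ 1 for all p. Define N F : P → ℝ by (N F)(p) = 1 − inf_{q ≤ p} F(q). Then for every p ∈ P: (N F)^w(p) = 1 − inf_{q ≤ p} F^w(q). -/
/-- The weak regularization of `F : P → ℝ`:
`F^w(p) = sup_{q ≤ p} inf_{q' ≤ q} F (q')`. -/
noncomputable def wreg {P : Type*} [PartialOrder P] (F : P → ℝ) (p : P) : ℝ :=
  ⨆ q : {q : P // q ≤ p}, ⨅ q' : {q' : P // q' ≤ (q : P)}, F (q' : P)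

lemma sup_one_sub {ι : Sort*} [Nonempty ι] (f : ι → ℝ)
    (h0 : ∀ i, 0 ≤ f i) (h1 : ∀ i, f i ≤ 1) :
    (⨆ i, (1 - f i)) = 1 - ⨅ i, f i := by
  have hbb : BddBelow (Set.range f) := ⟨0, by rintro _ ⟨i, rfl⟩; exact h0 i⟩
  have hba : BddAbove (Set.range fun i => 1 - f i) :=
    ⟨1, by rintro _ ⟨i, rfl⟩; have := h0 i; simp; linarith⟩
  apply le_antisymm
  · exact ciSup_le fun i => by have := ciInf_le hbb i; linarith
  · rw [sub_le_iff_le_add]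
    have : 1 - (⨆ i, (1 - f i)) ≤ ⨅ i, f i :=
      le_ciInf fun i => by have := le_ciSup hba i; linarith
    linarith
lemma inf_one_sub {ι : Sort*} [Nonempty ι] (f : ι → ℝ)
    (h0 : ∀ i, 0 ≤ f i) (h1 : ∀ i, f i ≤ 1) :
    (⨅ i, (1 - f i)) = 1 - ⨆ i, f i := by
  have h := sup_one_sub (fun i => 1 - f i) (fun i => by linarith [h1 i])
    (fun i => by linarith [h0 i])
  simp only [sub_sub_cancel] at h
  linarith

theorem stmt4 {P : Type*} [PartialOrder P] (F : P → ℝ)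
    (hF : ∀ p, F p ∈ Set.Icc (0 : ℝ) 1) (p : P) :
    wreg (fun p' => 1 - ⨅ q : {q : P // q ≤ p'}, F (q : P)) p
      = 1 - ⨅ q : {q : P // q ≤ p}, wreg F (q : P) := by
  have h0 : ∀ p, 0 ≤ F p := fun p => (hF p).1
  have h1 : ∀ p, F p ≤ 1 := fun p => (hF p).2
  -- inner inf of F over {q' ≤ q} is in [0,1]
  have hinf0 : ∀ q : P, 0 ≤ ⨅ q' : {q' : P // q' ≤ q}, F (q' : P) := by
    intro q
    have : Nonempty {q' : P // q' ≤ q} := ⟨⟨q, le_refl q⟩⟩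
    exact le_ciInf fun i => h0 _
  have hinf1 : ∀ q : P, (⨅ q' : {q' : P // q' ≤ q}, F (q' : P)) ≤ 1 := by
    intro q
    have hbb : BddBelow (Set.range fun q' : {q' : P // q' ≤ q} => F (q' : P)) :=
      ⟨0, by rintro _ ⟨i, rfl⟩; exact h0 _⟩
    exact le_trans (ciInf_le hbb ⟨q, le_refl q⟩) (h1 q)
  have hw0 : ∀ q : P, 0 ≤ wreg F q := by
    intro q
    have : Nonempty {r : P // r ≤ q} := ⟨⟨q, le_refl q⟩⟩
    have hba : BddAbove (Set.range fun r : {r : P // r ≤ q} =>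
        ⨅ q' : {q' : P // q' ≤ (r : P)}, F (q' : P)) :=
      ⟨1, by rintro _ ⟨i, rfl⟩; exact hinf1 _⟩
    exact le_trans (hinf0 q) (le_ciSup hba ⟨q, le_refl q⟩)
  have hw1 : ∀ q : P, wreg F q ≤ 1 := by
    intro q
    have : Nonempty {r : P // r ≤ q} := ⟨⟨q, le_refl q⟩⟩
    exact ciSup_le fun r => hinf1 _
  unfold wreg
  have step1 : ∀ q : {q : P // q ≤ p},
      (⨅ q' : {q' : P // q' ≤ (q : P)},
        (1 - ⨅ r : {r : P // r ≤ (q' : P)}, F (r : P)))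
      = 1 - wreg F (q : P) := by
    intro q
    have : Nonempty {q' : P // q' ≤ (q : P)} := ⟨⟨q, le_refl _⟩⟩
    rw [inf_one_sub (fun q' : {q' : P // q' ≤ (q : P)} =>
        ⨅ r : {r : P // r ≤ (q' : P)}, F (r : P))
      (fun q' => hinf0 _) (fun q' => hinf1 _)]
    rfl
  have : Nonempty {q : P // q ≤ p} := ⟨⟨p, le_refl p⟩⟩
  calc (⨆ q : {q : P // q ≤ p}, ⨅ q' : {q' : P // q' ≤ (q : P)},
          (1 - ⨅ r : {r : P // r ≤ (q' : P)}, F (r : P)))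
      = ⨆ q : {q : P // q ≤ p}, (1 - wreg F (q : P)) := by
        exact congrArg (fun g => ⨆ q : {q : P // q ≤ p}, g q) (funext step1)
    _ = 1 - ⨅ q : {q : P // q ≤ p}, wreg F (q : P) :=
        sup_one_sub _ (fun q => hw0 (q : P)) (fun q => hw1 (q : P))
end

section
/- Let P be a partially ordered set and let F, G : P → ℝ be antitone functions taking values in [0,1] (antitone meaning q ≤ p implies F(q) ≤ F(p)). Define S : P → ℝ by S(p) = min(F(p) + G(p), 1). Then for every p ∈ P: S^w(p) = sup_{q ≤ p} inf_{q' ≤ q} min(F^w(q') + G^w(q'), 1). -/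
section Aux

instance {P : Type*} [Preorder P] (q : P) : Nonempty {q' : P // q' ≤ q} :=
  ⟨⟨q, le_rfl⟩⟩

variable {P : Type*} [PartialOrder P] {F : P → ℝ}

lemma aux_bddBelow (h0 : ∀ x, 0 ≤ F x) (q : P) :
    BddBelow (Set.range fun q' : {q' : P // q' ≤ q} => F (q' : P)) := by
  refine ⟨0, ?_⟩
  rintro _ ⟨q', rfl⟩
  exact h0 _

lemma aux_iInf_nonneg (h0 : ∀ x, 0 ≤ F x) (q : P) :
    0 ≤ ⨅ q' : {q' : P // q' ≤ q}, F (q' : P) :=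
  le_ciInf fun q' => h0 _

lemma aux_iInf_le (h0 : ∀ x, 0 ≤ F x) {q : P} (r : P) (hr : r ≤ q) :
    (⨅ q' : {q' : P // q' ≤ q}, F (q' : P)) ≤ F r :=
  ciInf_le (aux_bddBelow h0 q) ⟨r, hr⟩

lemma aux_bddAbove (h0 : ∀ x, 0 ≤ F x) (h1 : ∀ x, F x ≤ 1) (p : P) :
    BddAbove (Set.range fun q : {q : P // q ≤ p} =>
      ⨅ q' : {q' : P // q' ≤ (q : P)}, F (q' : P)) := by
  refine ⟨1, ?_⟩
  rintro _ ⟨q, rfl⟩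
  exact (aux_iInf_le h0 (q : P) le_rfl).trans (h1 _)

lemma aux_le_wreg (h0 : ∀ x, 0 ≤ F x) (h1 : ∀ x, F x ≤ 1) {p : P} (s : P) (hs : s ≤ p) :
    (⨅ q' : {q' : P // q' ≤ s}, F (q' : P)) ≤ wreg F p :=
  le_ciSup (aux_bddAbove h0 h1 p) ⟨s, hs⟩

lemma aux_wreg_nonneg (h0 : ∀ x, 0 ≤ F x) (h1 : ∀ x, F x ≤ 1) (p : P) :
    0 ≤ wreg F p :=
  (aux_iInf_nonneg h0 p).trans (aux_le_wreg h0 h1 p le_rfl)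

lemma aux_wreg_le (h0 : ∀ x, 0 ≤ F x)
    (hmono : ∀ q p : P, q ≤ p → F q ≤ F p) (p : P) :
    wreg F p ≤ F p :=
  ciSup_le fun q => (aux_iInf_le h0 (q : P) le_rfl).trans (hmono _ _ q.2)

end Aux

theorem stmt5 {P : Type*} [PartialOrder P] (F G : P → ℝ)
    (hF : ∀ p, F p ∈ Set.Icc (0 : ℝ) 1) (hG : ∀ p, G p ∈ Set.Icc (0 : ℝ) 1)
    (hFmono : ∀ q p : P, q ≤ p → F q ≤ F p) (hGmono : ∀ q p : P, q ≤ p → G q ≤ G p)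
    (p : P) :
    wreg (fun p' => min (F p' + G p') 1) p
      = ⨆ q : {q : P // q ≤ p}, ⨅ q' : {q' : P // q' ≤ (q : P)},
          min (wreg F (q' : P) + wreg G (q' : P)) 1 := by
  have hF0 : ∀ x, 0 ≤ F x := fun x => (hF x).1
  have hF1 : ∀ x, F x ≤ 1 := fun x => (hF x).2
  have hG0 : ∀ x, 0 ≤ G x := fun x => (hG x).1
  have hG1 : ∀ x, G x ≤ 1 := fun x => (hG x).2
  have hS0 : ∀ x, 0 ≤ min (F x + G x) 1 :=
    fun x => le_min (add_nonneg (hF0 x) (hG0 x)) zero_le_one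
  -- key inner equality
  have key : ∀ q : P,
      (⨅ q' : {q' : P // q' ≤ q}, min (F (q' : P) + G (q' : P)) 1)
        = ⨅ q' : {q' : P // q' ≤ q},
            min (wreg F (q' : P) + wreg G (q' : P)) 1 := by
    intro q
    apply le_antisymm
    · -- ≤ : epsilon argument
      apply le_ciInf
      rintro ⟨q', hq'⟩
      apply le_min
      · -- inf ≤ wreg F q' + wreg G q'
        apply le_of_forall_pos_le_add
        intro ε hε
        -- find s' ≤ q' with F s' < wreg F q' + ε/2
        have h1 : (⨅ s' : {s' : P // s' ≤ q'}, F (s' : P)) < wreg F q' + ε / 2 :=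
          lt_of_le_of_lt (aux_le_wreg hF0 hF1 q' le_rfl) (by linarith)
        obtain ⟨⟨s', hs'⟩, hFs'⟩ := exists_lt_of_ciInf_lt h1
        -- find t' ≤ s' with G t' < wreg G q' + ε/2
        have h2 : (⨅ t' : {t' : P // t' ≤ s'}, G (t' : P)) < wreg G q' + ε / 2 :=
          lt_of_le_of_lt (aux_le_wreg hG0 hG1 s' hs') (by linarith)
        obtain ⟨⟨t', ht'⟩, hGt'⟩ := exists_lt_of_ciInf_lt h2
        have ht'q : t' ≤ q := le_trans (le_trans ht' hs') hq'
        have hinf : (⨅ r : {r : P // r ≤ q}, min (F (r : P) + G (r : P)) 1)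
            ≤ min (F t' + G t') 1 := aux_iInf_le hS0 t' ht'q
        have hFt' : F t' ≤ F s' := hFmono _ _ ht'
        calc (⨅ r : {r : P // r ≤ q}, min (F (r : P) + G (r : P)) 1)
            ≤ F t' + G t' := hinf.trans (min_le_left _ _)
          _ ≤ wreg F q' + wreg G q' + ε := by linarith
      · exact (aux_iInf_le hS0 q' hq').trans (min_le_right _ _)
    · -- ≥ : wreg ≤ original
      apply le_ciInf
      rintro ⟨q', hq'⟩
      refine (aux_iInf_le (F := fun x => min (wreg F x + wreg G x) 1) ?_ q' hq').trans ?_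
      · intro x
        exact le_min (add_nonneg (aux_wreg_nonneg hF0 hF1 x) (aux_wreg_nonneg hG0 hG1 x))
          zero_le_one
      · exact min_le_min (add_le_add (aux_wreg_le hF0 hFmono q') (aux_wreg_le hG0 hGmono q'))
          le_rfl
  rw [wreg]
  exact iSup_congr fun q => key (q : P)
end

section
/- Let P be a partially ordered set and let (F_n)_{n<ω} be a sequence of antitone functions P → ℝ taking values in [0,1] (antitone meaning q ≤ p implies F_n(q) ≤ F_n(p)). Define G : P → ℝ by G(p) = inf_n F_n(p). Then for every p ∈ P: G^w(p) = sup_{q ≤ p} inf_{q' ≤ q} inf_n F_n^w(q'). -/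
section aux
variable {P : Type*} [PartialOrder P]

instance downset_nonempty (q : P) : Nonempty {q' : P // q' ≤ q} := ⟨⟨q, le_refl q⟩⟩

lemma bddBelow_aux (F : P → ℝ) (h0 : ∀ p, (0:ℝ) ≤ F p) (q : P) :
    BddBelow (Set.range fun q' : {q' : P // q' ≤ q} => F (q' : P)) :=
  ⟨0, by rintro x ⟨q', rfl⟩; exact h0 _⟩

lemma inner_nonneg (F : P → ℝ) (h0 : ∀ p, (0:ℝ) ≤ F p) (q : P) :
    (0:ℝ) ≤ ⨅ q' : {q' : P // q' ≤ q}, F (q' : P) :=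
  le_ciInf fun q' => h0 _

lemma inner_le_one (F : P → ℝ) (h0 : ∀ p, (0:ℝ) ≤ F p) (h1 : ∀ p, F p ≤ 1) (q : P) :
    (⨅ q' : {q' : P // q' ≤ q}, F (q' : P)) ≤ 1 :=
  ciInf_le_of_le (bddBelow_aux F h0 q) ⟨q, le_refl q⟩ (h1 q)

lemma bddAbove_aux (F : P → ℝ) (h0 : ∀ p, (0:ℝ) ≤ F p) (h1 : ∀ p, F p ≤ 1) (p : P) :
    BddAbove (Set.range fun q : {q : P // q ≤ p} =>
      ⨅ q' : {q' : P // q' ≤ (q : P)}, F (q' : P)) :=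
  ⟨1, by rintro x ⟨q, rfl⟩; exact inner_le_one F h0 h1 _⟩

lemma wreg_nonneg (F : P → ℝ) (h0 : ∀ p, (0:ℝ) ≤ F p) (h1 : ∀ p, F p ≤ 1) (p : P) :
    (0:ℝ) ≤ wreg F p :=
  le_trans (inner_nonneg F h0 p)
    (le_ciSup (bddAbove_aux F h0 h1 p) (⟨p, le_refl p⟩ : {q : P // q ≤ p}))

/-- For monotone `F`, `wreg F ≤ F`. -/
lemma wreg_le (F : P → ℝ) (h0 : ∀ p, (0:ℝ) ≤ F p)
    (hmono : ∀ q p : P, q ≤ p → F q ≤ F p) (p : P) : wreg F p ≤ F p :=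
  ciSup_le fun q =>
    le_trans (ciInf_le_of_le (bddBelow_aux F h0 _) ⟨(q : P), le_refl _⟩ le_rfl)
      (hmono _ _ q.2)

/-- For `q' ≤ q`, the infimum of `F` over the downset of `q` is `≤ wreg F q'`. -/
lemma inf_le_wreg (F : P → ℝ) (h0 : ∀ p, (0:ℝ) ≤ F p) (h1 : ∀ p, F p ≤ 1)
    {q q' : P} (hq' : q' ≤ q) :
    (⨅ q'' : {q'' : P // q'' ≤ q}, F (q'' : P)) ≤ wreg F q' := by
  refine le_trans ?_ (le_ciSup (bddAbove_aux F h0 h1 q') (⟨q', le_refl q'⟩ : {r : P // r ≤ q'}))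
  exact le_ciInf fun r' => ciInf_le (bddBelow_aux F h0 q) ⟨(r' : P), le_trans r'.2 hq'⟩

end aux

theorem stmt6 {P : Type*} [PartialOrder P] (F : ℕ → P → ℝ)
    (hF : ∀ n p, F n p ∈ Set.Icc (0 : ℝ) 1)
    (hFmono : ∀ n, ∀ q p : P, q ≤ p → F n q ≤ F n p) (p : P) :
    wreg (fun p' => ⨅ n, F n p') p
      = ⨆ q : {q : P // q ≤ p}, ⨅ q' : {q' : P // q' ≤ (q : P)}, ⨅ n, wreg (F n) (q' : P) := by
  have h0 : ∀ n p, (0:ℝ) ≤ F n p := fun n p => (hF n p).1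
  have h1 : ∀ n p, F n p ≤ 1 := fun n p => (hF n p).2
  have hbddn : ∀ p : P, BddBelow (Set.range fun n => F n p) :=
    fun p => ⟨0, by rintro x ⟨n, rfl⟩; exact h0 n p⟩
  have hbddw : ∀ p : P, BddBelow (Set.range fun n => wreg (F n) p) :=
    fun p => ⟨0, by rintro x ⟨n, rfl⟩; exact wreg_nonneg (F n) (h0 n) (h1 n) p⟩
  unfold wreg
  congr 1
  funext q
  apply le_antisymm
  · -- ⨅ q', ⨅ n, F n q' ≤ ⨅ q', ⨅ n, wreg (F n) q'
    refine le_ciInf fun q' => le_ciInf fun n => ?_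
    calc (⨅ q'' : {q'' : P // q'' ≤ (q : P)}, ⨅ m, F m (q'' : P))
        ≤ ⨅ q'' : {q'' : P // q'' ≤ (q : P)}, F n (q'' : P) := by
          refine le_ciInf fun q'' => ?_
          refine ciInf_le_of_le ?_ q'' (ciInf_le (hbddn _) n)
          exact ⟨0, by rintro x ⟨r, rfl⟩; exact le_ciInf fun m => h0 m _⟩
      _ ≤ wreg (F n) (q' : P) := inf_le_wreg (F n) (h0 n) (h1 n) q'.2
  · -- ⨅ q', ⨅ n, wreg (F n) q' ≤ ⨅ q', ⨅ n, F n q'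
    refine le_ciInf fun q' => le_ciInf fun n => ?_
    refine ciInf_le_of_le ?_ q' ?_
    · exact ⟨0, by rintro x ⟨r, rfl⟩; exact le_ciInf fun m =>
        wreg_nonneg (F m) (h0 m) (h1 m) _⟩
    · exact le_trans (ciInf_le (hbddw _) n)
        (wreg_le (F n) (h0 n) (hFmono n) (q' : P))
end

section
/- Let P be a partially ordered set and let (F_n)_{n ∈ I} be a nonempty countable family of functions P → ℝ taking values in [0,1]. Define D : P → ℝ by D(p) = 1 − inf_{q ≤ p} inf_{n ∈ I} (1 − inf_{q' ≤ q} F_n(q')). Then for every p ∈ P: D(p) = sup_{n ∈ I} F_n^w(p). -/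
theorem stmt7 {P : Type*} [PartialOrder P] {ι : Type*} [Countable ι] [Nonempty ι]
    (F : ι → P → ℝ) (hF : ∀ n p, F n p ∈ Set.Icc (0 : ℝ) 1) (p : P) :
    (1 - ⨅ q : {q : P // q ≤ p}, ⨅ n : ι,
        (1 - ⨅ q' : {q' : P // q' ≤ (q : P)}, F n (q' : P)))
      = ⨆ n : ι, wreg (F n) p := by
  haveI : ∀ q : P, Nonempty {q' : P // q' ≤ q} := fun q => ⟨⟨q, le_rfl⟩⟩
  haveI : Nonempty {q : P // q ≤ p} := ⟨⟨p, le_rfl⟩⟩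
  set g : {q : P // q ≤ p} → ι → ℝ :=
    fun q n => ⨅ q' : {q' : P // q' ≤ (q : P)}, F n (q' : P) with hg
  have hg0 : ∀ q n, 0 ≤ g q n := fun q n =>
    le_ciInf fun q' => (hF n q').1
  have hbb : ∀ q n, BddBelow (Set.range fun q' : {q' : P // q' ≤ (q : P)} => F n (q' : P)) :=
    fun q n => ⟨0, by rintro x ⟨q', rfl⟩; exact (hF n q').1⟩
  have hg1 : ∀ q n, g q n ≤ 1 := fun q n =>
    ciInf_le_of_le (hbb q n) ⟨q, le_rfl⟩ (hF n q).2
  have hbbn : ∀ q : {q : P // q ≤ p}, BddBelow (Set.range fun n : ι => 1 - g q n) :=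
    fun q => ⟨0, by rintro x ⟨n, rfl⟩; dsimp only; linarith [hg1 q n]⟩
  have hbaq : ∀ n : ι, BddAbove (Set.range fun q : {q : P // q ≤ p} => g q n) :=
    fun n => ⟨1, by rintro x ⟨q, rfl⟩; exact hg1 q n⟩
  have hwreg : ∀ n, wreg (F n) p = ⨆ q : {q : P // q ≤ p}, g q n := fun n => rfl
  have hban : BddAbove (Set.range fun n : ι => wreg (F n) p) := by
    refine ⟨1, ?_⟩
    rintro x ⟨n, rfl⟩
    dsimp only
    rw [hwreg]
    exact Real.iSup_le (fun q => hg1 q n) one_pos.le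
  have key : ∀ q n, g q n ≤ ⨆ m : ι, wreg (F m) p := by
    intro q n
    calc g q n ≤ wreg (F n) p := by
          rw [hwreg]; exact le_ciSup (hbaq n) q
      _ ≤ ⨆ m : ι, wreg (F m) p := le_ciSup hban n
  apply le_antisymm
  · rw [sub_le_iff_le_add, ← sub_le_iff_le_add']
    apply le_ciInf; intro q
    apply le_ciInf; intro n
    have := key q n
    linarith
  · apply ciSup_le; intro n
    rw [hwreg]
    apply Real.iSup_le _ (by
      have h0 : (0:ℝ) ≤ ⨅ q : {q : P // q ≤ p}, ⨅ m : ι, (1 - g q m) := by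
        apply le_ciInf; intro q
        apply le_ciInf; intro m
        linarith [hg1 q m]
      have h1 : (⨅ q : {q : P // q ≤ p}, ⨅ m : ι, (1 - g q m)) ≤ 1 := by
        inhabit {q : P // q ≤ p}
        refine ciInf_le_of_le ⟨0, ?_⟩ default ?_
        · rintro x ⟨q, rfl⟩
          apply le_ciInf; intro m; linarith [hg1 q m]
        · refine ciInf_le_of_le (hbbn default) (Classical.arbitrary ι) ?_
          linarith [hg0 default (Classical.arbitrary ι)]
      linarith)
    intro q
    rw [le_sub_iff_add_le, ← le_sub_iff_add_le']
    refine ciInf_le_of_le ?_ q ?_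
    · refine ⟨0, ?_⟩
      rintro x ⟨r, rfl⟩
      apply le_ciInf; intro m; linarith [hg1 r m]
    · exact ciInf_le_of_le (hbbn q) n le_rfl
end

section
/- Let P be a partially ordered set and let (F_n)_{n<ω} be a countable family of functions P → ℝ taking values in [0,1]. Then every p ∈ P belongs to some nonempty subset G ⊆ P which is downward directed, upward closed, and generic for every F_n, i.e., for every n and every real r > 1 there exists q ∈ G with F_n(q) + (1 − inf_{q' ≤ q} F_n(q')) < r. -/
lemma key8 {P : Type*} [PartialOrder P] (F : P → ℝ) (h0 : ∀ p, 0 ≤ F p)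
    (p : P) {ε : ℝ} (hε : 0 < ε) :
    ∃ q, q ≤ p ∧ F q + (1 - ⨅ q' : {q' : P // q' ≤ q}, F (q' : P)) < 1 + ε := by
  have hbdd : ∀ x : P, BddBelow (Set.range fun q' : {q' : P // q' ≤ x} => F (q' : P)) := by
    intro x
    exact ⟨0, by rintro _ ⟨q', rfl⟩; exact h0 _⟩
  have hne : Nonempty {q' : P // q' ≤ p} := ⟨⟨p, le_refl p⟩⟩
  have h1 : (⨅ q' : {q' : P // q' ≤ p}, F (q' : P)) <
      (⨅ q' : {q' : P // q' ≤ p}, F (q' : P)) + ε := by linarith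
  obtain ⟨⟨q, hq⟩, hq2⟩ := exists_lt_of_ciInf_lt h1
  refine ⟨q, hq, ?_⟩
  have hneq : Nonempty {q' : P // q' ≤ q} := ⟨⟨q, le_refl q⟩⟩
  have h2 : (⨅ q' : {q' : P // q' ≤ p}, F (q' : P)) ≤
      (⨅ q' : {q' : P // q' ≤ q}, F (q' : P)) := by
    refine le_ciInf ?_
    rintro ⟨q'', hq''⟩
    exact ciInf_le (hbdd p) ⟨q'', hq''.trans hq⟩
  simp only at hq2 ⊢
  linarith

theorem stmt8 {P : Type*} [PartialOrder P] (F : ℕ → P → ℝ)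
    (hF : ∀ n p, F n p ∈ Set.Icc (0 : ℝ) 1) (p : P) :
    ∃ G : Set P, p ∈ G ∧ G.Nonempty ∧
      (∀ a ∈ G, ∀ b ∈ G, ∃ c ∈ G, c ≤ a ∧ c ≤ b) ∧
      (∀ a ∈ G, ∀ b : P, a ≤ b → b ∈ G) ∧
      (∀ n : ℕ, ∀ r : ℝ, 1 < r →
        ∃ q ∈ G, F n q + (1 - ⨅ q' : {q' : P // q' ≤ q}, F n (q' : P)) < r) := by
  have h0 : ∀ n q, 0 ≤ F n q := fun n q => (hF n q).1
  -- build a decreasing sequence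
  have hstep : ∀ (i : ℕ) (x : P), ∃ q, q ≤ x ∧
      F (Nat.unpair i).1 q +
        (1 - ⨅ q' : {q' : P // q' ≤ q}, F (Nat.unpair i).1 (q' : P)) <
        1 + 1 / ((Nat.unpair i).2 + 1 : ℝ) := by
    intro i x
    exact key8 (F (Nat.unpair i).1) (h0 _) x (by positivity)
  choose f hf1 hf2 using hstep
  let seq : ℕ → P := fun i => Nat.rec p (fun i q => f i q) i
  have hseq : ∀ i, seq (i + 1) ≤ seq i := fun i => hf1 i (seq i)
  have hanti : Antitone seq := antitone_nat_of_succ_le hseq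
  refine ⟨{x | ∃ i, seq i ≤ x}, ⟨0, le_refl p⟩, ⟨p, 0, le_refl p⟩, ?_, ?_, ?_⟩
  · rintro a ⟨i, hi⟩ b ⟨j, hj⟩
    exact ⟨seq (max i j), ⟨max i j, le_refl _⟩,
      (hanti (le_max_left i j)).trans hi, (hanti (le_max_right i j)).trans hj⟩
  · rintro a ⟨i, hi⟩ b hab
    exact ⟨i, hi.trans hab⟩
  · intro n r hr
    obtain ⟨k, hk⟩ := exists_nat_one_div_lt (show (0:ℝ) < r - 1 by linarith)
    refine ⟨seq (Nat.pair n k + 1), ⟨Nat.pair n k + 1, le_refl _⟩, ?_⟩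
    have := hf2 (Nat.pair n k) (seq (Nat.pair n k))
    rw [Nat.unpair_pair] at this
    simp only at this
    have : F n (seq (Nat.pair n k + 1)) +
        (1 - ⨅ q' : {q' : P // q' ≤ seq (Nat.pair n k + 1)}, F n (q' : P)) <
        1 + 1 / ((k : ℝ) + 1) := this
    linarith
end

section
/- Let P be a partially ordered set, let F : P → ℝ be an antitone function taking values in [0,1] (antitone meaning q ≤ p implies F(q) ≤ F(p)), and let G ⊆ P be nonempty, downward directed, and generic for F. Then inf_{p ∈ G} F(p) = inf_{p ∈ G} F^w(p). -/
theorem stmt9 {P : Type*} [PartialOrder P] (F : P → ℝ)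
    (hF : ∀ p, F p ∈ Set.Icc (0 : ℝ) 1)
    (hFmono : ∀ q p : P, q ≤ p → F q ≤ F p)
    (G : Set P) (hne : G.Nonempty)
    (hdir : ∀ a ∈ G, ∀ b ∈ G, ∃ c ∈ G, c ≤ a ∧ c ≤ b)
    (hgen : ∀ r : ℝ, 1 < r →
      ∃ q ∈ G, F q + (1 - ⨅ q' : {q' : P // q' ≤ q}, F (q' : P)) < r) :
    (⨅ p : G, F (p : P)) = ⨅ p : G, wreg F (p : P) := by
  haveI : ∀ q : P, Nonempty {q' : P // q' ≤ q} := fun q => ⟨⟨q, le_refl q⟩⟩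
  haveI : Nonempty G := hne.to_subtype
  set m : P → ℝ := fun q => ⨅ q' : {q' : P // q' ≤ q}, F (q' : P) with hm
  have hbdd : ∀ q : P, BddBelow (Set.range fun q' : {q' : P // q' ≤ q} => F (q' : P)) :=
    fun q => ⟨0, by rintro x ⟨q', rfl⟩; exact (hF q').1⟩
  have hm_le : ∀ q : P, m q ≤ F q := fun q => ciInf_le (hbdd q) ⟨q, le_refl q⟩
  have hm_nonneg : ∀ q : P, 0 ≤ m q := fun q => le_ciInf fun q' => (hF q').1
  have hm_le_one : ∀ q : P, m q ≤ 1 := fun q => (hm_le q).trans (hF q).2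
  have hbddw : ∀ p : P, BddAbove (Set.range fun q : {q : P // q ≤ p} => m (q : P)) :=
    fun p => ⟨1, by rintro x ⟨q, rfl⟩; exact hm_le_one q⟩
  have hwle : ∀ p : P, wreg F p ≤ F p := by
    intro p
    apply ciSup_le
    intro q
    exact (hm_le q).trans (hFmono _ _ q.2)
  have hwge : ∀ p : P, 0 ≤ wreg F p := by
    intro p
    exact (hm_nonneg p).trans (le_ciSup (hbddw p) ⟨p, le_refl p⟩)
  have hbG : BddBelow (Set.range fun p : G => F (p : P)) :=
    ⟨0, by rintro x ⟨p, rfl⟩; exact (hF p).1⟩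
  have hbGw : BddBelow (Set.range fun p : G => wreg F (p : P)) :=
    ⟨0, by rintro x ⟨p, rfl⟩; exact hwge p⟩
  apply le_antisymm
  · apply le_ciInf
    rintro ⟨p, hpG⟩
    refine le_of_forall_pos_le_add ?_
    intro ε hε
    obtain ⟨q, hqG, hq⟩ := hgen (1 + ε) (by linarith)
    have hFq : F q < m q + ε := by linarith
    obtain ⟨c, hcG, hcp, hcq⟩ := hdir p hpG q hqG
    have h1 : (⨅ p : G, F (p : P)) ≤ F c := ciInf_le hbG ⟨c, hcG⟩
    have h2 : F c ≤ F q := hFmono _ _ hcq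
    have h3 : m q ≤ m c := le_ciInf fun q' => ciInf_le (hbdd q) ⟨q', q'.2.trans hcq⟩
    have h4 : m c ≤ wreg F p := le_ciSup (hbddw p) ⟨c, hcp⟩
    linarith
  · apply le_ciInf
    rintro ⟨p, hpG⟩
    exact (ciInf_le hbGw ⟨p, hpG⟩).trans (hwle p)
end

section
/- Let P be a partially ordered set, let F : P → ℝ be an antitone function taking values in [0,1] (antitone meaning q ≤ p implies F(q) ≤ F(p)), and let G ⊆ P be nonempty, downward directed, and generic for F. Then inf_{p ∈ G} (1 − inf_{q ≤ p} F(q)) = 1 − inf_{p ∈ G} F(p). -/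
theorem stmt10 {P : Type*} [PartialOrder P] (F : P → ℝ)
    (hF : ∀ p, F p ∈ Set.Icc (0 : ℝ) 1)
    (hFmono : ∀ q p : P, q ≤ p → F q ≤ F p)
    (G : Set P) (hne : G.Nonempty)
    (hdir : ∀ a ∈ G, ∀ b ∈ G, ∃ c ∈ G, c ≤ a ∧ c ≤ b)
    (hgen : ∀ r : ℝ, 1 < r →
      ∃ q ∈ G, F q + (1 - ⨅ q' : {q' : P // q' ≤ q}, F (q' : P)) < r) :
    (⨅ p : G, (1 - ⨅ q : {q : P // q ≤ (p : P)}, F (q : P))) = 1 - ⨅ p : G, F (p : P) := by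
  have hne' : Nonempty G := hne.to_subtype
  have hbdd : ∀ p : P, BddBelow (Set.range fun q : {q : P // q ≤ p} => F (q : P)) :=
    fun p => ⟨0, by rintro x ⟨q, rfl⟩; exact (hF q).1⟩
  set I : P → ℝ := fun p => ⨅ q : {q : P // q ≤ p}, F (q : P) with hI
  have hsub : ∀ p : P, Nonempty {q : P // q ≤ p} := fun p => ⟨⟨p, le_refl p⟩⟩
  have hIle : ∀ p : P, I p ≤ F p := fun p => ciInf_le (hbdd p) ⟨p, le_refl p⟩
  have hI0 : ∀ p : P, 0 ≤ I p := fun p => le_ciInf fun q => (hF q).1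
  have hbddG : BddBelow (Set.range fun p : G => F (p : P)) :=
    ⟨0, by rintro x ⟨p, rfl⟩; exact (hF p).1⟩
  have hbddG' : BddBelow (Set.range fun p : G => 1 - I (p : P)) := by
    refine ⟨0, ?_⟩
    rintro x ⟨p, rfl⟩
    have h1 := hIle (p : P)
    have h2 := (hF (p : P)).2
    simp only
    linarith
  set A : ℝ := ⨅ p : G, F (p : P) with hA
  apply le_antisymm
  · apply le_of_forall_pos_le_add
    intro ε hε
    obtain ⟨q, hqG, hq⟩ := hgen (1 + ε) (by linarith)
    have hAq : A ≤ F q := ciInf_le hbddG ⟨q, hqG⟩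
    have h1 : (⨅ p : G, (1 - I (p : P))) ≤ 1 - I q := ciInf_le hbddG' ⟨q, hqG⟩
    have hq' : F q + (1 - I q) < 1 + ε := hq
    linarith
  · refine le_ciInf fun p => ?_
    have : I (p : P) ≤ A := by
      refine le_ciInf fun q' => ?_
      obtain ⟨c, hcG, hcp, hcq⟩ := hdir (p : P) p.2 (q' : P) q'.2
      have h1 : I (p : P) ≤ F c := ciInf_le (hbdd (p : P)) ⟨c, hcp⟩
      exact h1.trans (hFmono c q' hcq)
    linarith
end
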